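/- Let A, B ∈ ℝ², let ρ be a linear automorphism of ℝ² satisfying ρ(A) = B and ρ(B) = −A, and let m be a positive integer. Let α be the translation z ↦ z + A and β the translation z ↦ z + B, viewed as elements of the group of bijections of ℝ². Then the subgroup L generated by {α^m, β^m} (equivalently, by the translations by m•A and m•B) is a normal subgroup of the subgroup G generated by {α, β, ρ}. -/

import Mathlib

lemma addRight_mul_perm {v w : ℝ × ℝ} :
    (Equiv.addRight v : Equiv.Perm (ℝ × ℝ)) * Equiv.addRight w = Equiv.addRight (w + v) := by
  ext x <;> simp [Equiv.Perm.mul_apply, add_assoc]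

lemma conj_addRight (ρ : (ℝ × ℝ) ≃ₗ[ℝ] ℝ × ℝ) (v : ℝ × ℝ) :
    (ρ.toEquiv : Equiv.Perm (ℝ × ℝ)) * Equiv.addRight v * (ρ.toEquiv : Equiv.Perm (ℝ × ℝ))⁻¹
      = Equiv.addRight (ρ v) := by
  ext x <;> simp [Equiv.Perm.mul_apply, map_add, Equiv.Perm.inv_def, LinearEquiv.coe_toEquiv, LinearEquiv.apply_symm_apply]

lemma addRight_neg_perm (v : ℝ × ℝ) :
    (Equiv.addRight (-v) : Equiv.Perm (ℝ × ℝ)) = (Equiv.addRight v)⁻¹ := by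
  ext x <;> simp

lemma conj_pow_eq {M : Type*} [Group M] (g h : M) (n : ℕ) :
    g * h ^ n * g⁻¹ = (g * h * g⁻¹) ^ n := by
  induction n with
  | zero => group
  | succ k ih => rw [pow_succ, pow_succ, ← ih]; group

theorem stmt4 (A B : ℝ × ℝ) (ρ : (ℝ × ℝ) ≃ₗ[ℝ] ℝ × ℝ)
    (hA : ρ A = B) (hB : ρ B = -A) (m : ℕ) (hm : 0 < m)
    (L G : Subgroup (Equiv.Perm (ℝ × ℝ)))
    (hL : L = Subgroup.closure
      ({(Equiv.addRight A) ^ m, (Equiv.addRight B) ^ m} : Set (Equiv.Perm (ℝ × ℝ))))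
    (hG : G = Subgroup.closure
      ({Equiv.addRight A, Equiv.addRight B, (ρ.toEquiv : Equiv.Perm (ℝ × ℝ))} :
        Set (Equiv.Perm (ℝ × ℝ)))) :
    L ≤ G ∧ (L.subgroupOf G).Normal := by
  set α : Equiv.Perm (ℝ × ℝ) := Equiv.addRight A with hα
  set β : Equiv.Perm (ℝ × ℝ) := Equiv.addRight B with hβ
  set r : Equiv.Perm (ℝ × ℝ) := (ρ.toEquiv : Equiv.Perm (ℝ × ℝ)) with hr
  have hαG : α ∈ G := by rw [hG]; exact Subgroup.subset_closure (by simp)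
  have hβG : β ∈ G := by rw [hG]; exact Subgroup.subset_closure (by simp)
  have hLG : L ≤ G := by
    rw [hL]
    refine Subgroup.closure_le G |>.2 ?_
    rintro x (rfl | rfl)
    · exact pow_mem hαG m
    · exact pow_mem hβG m
  refine ⟨hLG, ?_⟩
  have hαm : α ^ m ∈ L := by rw [hL]; exact Subgroup.subset_closure (by simp)
  have hβm : β ^ m ∈ L := by rw [hL]; exact Subgroup.subset_closure (by simp)
  -- commuting translations
  have hc : α * β = β * α := by
    rw [hα, hβ, addRight_mul_perm, addRight_mul_perm, add_comm]
  -- conjugation facts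
  have crA : r * α * r⁻¹ = β := by rw [hα, hβ, hr, conj_addRight, hA]
  have crB : r * β * r⁻¹ = α⁻¹ := by
    rw [hα, hβ, hr, conj_addRight, hB, addRight_neg_perm]
  have hrinv : (ρ.symm.toEquiv : Equiv.Perm (ℝ × ℝ)) = r⁻¹ := rfl
  have hsA : ρ.symm A = -B :=
    ρ.injective (by rw [ρ.apply_symm_apply, map_neg, hB, neg_neg])
  have hsB : ρ.symm B = A := ρ.injective (by rw [ρ.apply_symm_apply, hA])
  have crA' : r⁻¹ * α * r = β⁻¹ := by
    have := conj_addRight ρ.symm A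
    rw [hrinv, inv_inv, hsA, addRight_neg_perm, ← hα, ← hβ] at this
    exact this
  have crB' : r⁻¹ * β * r = α := by
    have := conj_addRight ρ.symm B
    rw [hrinv, inv_inv, hsB, ← hα, ← hβ] at this
    exact this
  -- key: a `g` conjugating each generator of `L` into `L` (both ways) normalizes `L`
  have key : ∀ g : Equiv.Perm (ℝ × ℝ),
      g * (α ^ m) * g⁻¹ ∈ L → g * (β ^ m) * g⁻¹ ∈ L →
      g⁻¹ * (α ^ m) * g ∈ L → g⁻¹ * (β ^ m) * g ∈ L → g ∈ Subgroup.normalizer (L : Set (Equiv.Perm (ℝ × ℝ))) := by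
    intro g h1 h2 h3 h4
    have hmap : ∀ h : Equiv.Perm (ℝ × ℝ), h ∈ L → g * h * g⁻¹ ∈ L := by
      intro h hh
      rw [hL] at hh
      induction hh using Subgroup.closure_induction with
      | mem x hx => rcases hx with rfl | rfl
                    · exact h1
                    · exact h2
      | one => simpa using one_mem L
      | mul x y _ _ ihx ihy =>
        have e : g * (x * y) * g⁻¹ = (g * x * g⁻¹) * (g * y * g⁻¹) := by group
        rw [e]; exact mul_mem ihx ihy
      | inv x _ ihx =>
        have e : g * x⁻¹ * g⁻¹ = (g * x * g⁻¹)⁻¹ := by group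
        rw [e]; exact inv_mem ihx
    have hmap' : ∀ h : Equiv.Perm (ℝ × ℝ), h ∈ L → g⁻¹ * h * g ∈ L := by
      intro h hh
      rw [hL] at hh
      induction hh using Subgroup.closure_induction with
      | mem x hx => rcases hx with rfl | rfl
                    · exact h3
                    · exact h4
      | one => simpa using one_mem L
      | mul x y _ _ ihx ihy =>
        have e : g⁻¹ * (x * y) * g = (g⁻¹ * x * g) * (g⁻¹ * y * g) := by group
        rw [e]; exact mul_mem ihx ihy
      | inv x _ ihx =>
        have e : g⁻¹ * x⁻¹ * g = (g⁻¹ * x * g)⁻¹ := by group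
        rw [e]; exact inv_mem ihx
    rw [Subgroup.mem_normalizer_iff]
    intro h
    refine ⟨hmap h, fun hh => ?_⟩
    have := hmap' _ hh
    simpa [mul_assoc] using this
  have conj_pow_inv : ∀ (g h : Equiv.Perm (ℝ × ℝ)),
      g⁻¹ * h ^ m * g = (g⁻¹ * h * g) ^ m := by
    intro g h
    have := conj_pow_eq g⁻¹ h m
    rwa [inv_inv] at this
  have hGnorm : G ≤ Subgroup.normalizer (L : Set (Equiv.Perm (ℝ × ℝ))) := by
    rw [hG]
    refine Subgroup.closure_le _ |>.2 ?_
    rintro x (rfl | rfl | rfl)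
    · refine key α ?_ ?_ ?_ ?_
      · rw [conj_pow_eq, show α * α * α⁻¹ = α by group]; exact hαm
      · rw [conj_pow_eq, show α * β * α⁻¹ = β by rw [hc, mul_inv_cancel_right]]; exact hβm
      · rw [conj_pow_inv, show α⁻¹ * α * α = α by group]; exact hαm
      · rw [conj_pow_inv, show α⁻¹ * β * α = β by rw [mul_assoc, ← hc, inv_mul_cancel_left]]
        exact hβm
    · refine key β ?_ ?_ ?_ ?_
      · rw [conj_pow_eq, show β * α * β⁻¹ = α by rw [← hc, mul_inv_cancel_right]]; exact hαm
      · rw [conj_pow_eq, show β * β * β⁻¹ = β by group]; exact hβm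
      · rw [conj_pow_inv, show β⁻¹ * α * β = α by rw [mul_assoc, hc, inv_mul_cancel_left]]
        exact hαm
      · rw [conj_pow_inv, show β⁻¹ * β * β = β by group]; exact hβm
    · refine key r ?_ ?_ ?_ ?_
      · rw [conj_pow_eq, crA]; exact hβm
      · rw [conj_pow_eq, crB, inv_pow]; exact inv_mem hαm
      · rw [conj_pow_inv, crA', inv_pow]; exact inv_mem hβm
      · rw [conj_pow_inv, crB']; exact hαm
  refine ⟨fun n hn g => ?_⟩
  rw [Subgroup.mem_subgroupOf] at hn ⊢
  simpa [mul_assoc] using (Subgroup.mem_normalizer_iff.mp (hGnorm g.2) _).mp hn
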